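/- For every integer n ≥ 1, the polynomial (Ψ′_n(X,Y))² ∈ ℤ[X,A,B] has the form n²·X^{n²−1} + c·X^{n²−3} + (lower order terms), for some c ∈ ℤ[A,B]; i.e. it is monic of degree n²−1 up to the factor n², with vanishing coefficient in degree n²−2. -/

import Mathlib

open Polynomial WeierstrassCurve

/-- The generic coefficient ring `ℤ[A, B]`. -/
noncomputable abbrev DivPolyRing : Type := MvPolynomial (Fin 2) ℤ

/-- The generic short Weierstrass curve `y² = x³ + Ax + B` over `ℤ[A, B]`. -/
noncomputable def genericShortWeierstrass : WeierstrassCurve DivPolyRing :=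
  { a₁ := 0, a₂ := 0, a₃ := 0, a₄ := MvPolynomial.X 0, a₆ := MvPolynomial.X 1 }

namespace DivPolyAux

open MvPolynomial

noncomputable abbrev Wc := genericShortWeierstrass
local notation "e" => MvPolynomial.finSuccEquiv ℤ 2

/-- Weights: `X ↦ 2`, `A ↦ 4`, `B ↦ 6`. -/
def wt : Fin 3 → ℕ := ![2, 4, 6]

/-- `p ∈ ℤ[A,B][X]` is isobaric of weight `w`. -/
def Iso (w : ℕ) (p : Polynomial DivPolyRing) : Prop :=
  MvPolynomial.IsWeightedHomogeneous wt ((e).symm p) w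

lemma Iso.of_eq {w w' p} (h : Iso w p) (h' : w = w') : Iso w' p := h' ▸ h

lemma Iso.mul {w w' p q} (h : Iso w p) (h' : Iso w' q) : Iso (w + w') (p * q) := by
  unfold Iso at *; rw [map_mul]; exact h.mul h'

lemma Iso.pow {w p} (h : Iso w p) (k : ℕ) : Iso (k * w) (p ^ k) := by
  induction k with
  | zero => simpa [Iso] using isWeightedHomogeneous_one ..
  | succ k ih => rw [pow_succ]; exact (ih.mul h).of_eq (by ring)

lemma Iso.add {w p q} (h : Iso w p) (h' : Iso w q) : Iso w (p + q) := by
  unfold Iso at *; rw [map_add]; exact h.add h'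

lemma Iso.sub {w p q} (h : Iso w p) (h' : Iso w q) : Iso w (p - q) := by
  unfold Iso at *
  rw [map_sub]
  exact (weightedHomogeneousSubmodule ℤ wt w).sub_mem h h'

lemma Iso.neg {w p} (h : Iso w p) : Iso w (-p) := by
  unfold Iso at *
  rw [map_neg]
  exact (weightedHomogeneousSubmodule ℤ wt w).neg_mem h

lemma Iso.zero (w : ℕ) : Iso w 0 := by simpa [Iso] using isWeightedHomogeneous_zero ..
lemma Iso.one : Iso 0 1 := by simpa [Iso] using isWeightedHomogeneous_one ..

lemma isoX : Iso 2 Polynomial.X := by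
  unfold Iso
  have h : (e).symm Polynomial.X = MvPolynomial.X 0 := by
    rw [AlgEquiv.symm_apply_eq, finSuccEquiv_X_zero]
  rw [h]
  exact isWeightedHomogeneous_X ℤ wt 0

lemma isoA : Iso 4 (Polynomial.C (MvPolynomial.X 0)) := by
  unfold Iso
  have h : (e).symm (Polynomial.C (MvPolynomial.X 0)) = MvPolynomial.X 1 := by
    rw [AlgEquiv.symm_apply_eq, show (1 : Fin 3) = (0 : Fin 2).succ from rfl, finSuccEquiv_X_succ]
  rw [h]
  exact isWeightedHomogeneous_X ℤ wt 1

lemma isoB : Iso 6 (Polynomial.C (MvPolynomial.X 1)) := by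
  unfold Iso
  have h : (e).symm (Polynomial.C (MvPolynomial.X 1)) = MvPolynomial.X 2 := by
    rw [AlgEquiv.symm_apply_eq, show (2 : Fin 3) = (1 : Fin 2).succ from rfl, finSuccEquiv_X_succ]
  rw [h]
  exact isWeightedHomogeneous_X ℤ wt 2

lemma isoInt (z : ℤ) : Iso 0 (Polynomial.C (MvPolynomial.C z)) := by
  unfold Iso
  have h : (e).symm (Polynomial.C (MvPolynomial.C z)) = MvPolynomial.C z := by
    rw [AlgEquiv.symm_apply_eq]; simp
  rw [h]
  exact isWeightedHomogeneous_C ..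

lemma hb₂ : Wc.b₂ = 0 := by simp [WeierstrassCurve.b₂, genericShortWeierstrass]
lemma hb₄ : Wc.b₄ = 2 * MvPolynomial.X 0 := by simp [WeierstrassCurve.b₄, genericShortWeierstrass]
lemma hb₆ : Wc.b₆ = 4 * MvPolynomial.X 1 := by simp [WeierstrassCurve.b₆, genericShortWeierstrass]
lemma hb₈ : Wc.b₈ = -(MvPolynomial.X 0 ^ 2) := by
  simp [WeierstrassCurve.b₈, genericShortWeierstrass]

lemma iso_Ψ₂Sq : Iso 6 Wc.Ψ₂Sq := by
  have h : Wc.Ψ₂Sq = Polynomial.C (MvPolynomial.C 4) * Polynomial.X ^ 3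
      + Polynomial.C (MvPolynomial.C 4) * (Polynomial.C (MvPolynomial.X 0) * Polynomial.X)
      + Polynomial.C (MvPolynomial.C 4) * Polynomial.C (MvPolynomial.X 1) := by
    unfold WeierstrassCurve.Ψ₂Sq
    rw [hb₂, hb₄, hb₆]
    simp only [map_zero, zero_mul, add_zero, map_mul, map_ofNat, map_one]
    ring
  rw [h]
  exact ((((isoInt 4).mul (isoX.pow 3)).of_eq (by norm_num)).add
      (((isoInt 4).mul ((isoA).mul isoX)).of_eq (by norm_num))).add
    (((isoInt 4).mul isoB).of_eq (by norm_num))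

lemma iso_Ψ₃ : Iso 8 Wc.Ψ₃ := by
  have h : Wc.Ψ₃ = Polynomial.C (MvPolynomial.C 3) * Polynomial.X ^ 4
      + Polynomial.C (MvPolynomial.C 6) * (Polynomial.C (MvPolynomial.X 0) * Polynomial.X ^ 2)
      + Polynomial.C (MvPolynomial.C 12) * (Polynomial.C (MvPolynomial.X 1) * Polynomial.X)
      - Polynomial.C (MvPolynomial.X 0) * Polynomial.C (MvPolynomial.X 0) := by
    unfold WeierstrassCurve.Ψ₃
    rw [hb₂, hb₄, hb₆, hb₈]
    simp only [map_zero, zero_mul, add_zero, map_mul, map_ofNat, map_one, map_neg, map_pow]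
    ring
  rw [h]
  exact (((((isoInt 3).mul (isoX.pow 4)).of_eq (by norm_num)).add
      (((isoInt 6).mul ((isoA).mul (isoX.pow 2))).of_eq (by norm_num))).add
    (((isoInt 12).mul ((isoB).mul isoX)).of_eq (by norm_num))).sub
    ((isoA.mul isoA).of_eq (by norm_num))

lemma iso_preΨ₄ : Iso 12 Wc.preΨ₄ := by
  have h : Wc.preΨ₄ = Polynomial.C (MvPolynomial.C 2) * Polynomial.X ^ 6
      + Polynomial.C (MvPolynomial.C 10) * (Polynomial.C (MvPolynomial.X 0) * Polynomial.X ^ 4)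
      + Polynomial.C (MvPolynomial.C 40) * (Polynomial.C (MvPolynomial.X 1) * Polynomial.X ^ 3)
      - Polynomial.C (MvPolynomial.C 10) *
          (Polynomial.C (MvPolynomial.X 0) * Polynomial.C (MvPolynomial.X 0) * Polynomial.X ^ 2)
      - Polynomial.C (MvPolynomial.C 8) *
          (Polynomial.C (MvPolynomial.X 0) * Polynomial.C (MvPolynomial.X 1) * Polynomial.X)
      - Polynomial.C (MvPolynomial.C 2) *
          (Polynomial.C (MvPolynomial.X 0) * Polynomial.C (MvPolynomial.X 0) *
            Polynomial.C (MvPolynomial.X 0))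
      - Polynomial.C (MvPolynomial.C 16) *
          (Polynomial.C (MvPolynomial.X 1) * Polynomial.C (MvPolynomial.X 1)) := by
    unfold WeierstrassCurve.preΨ₄
    rw [hb₂, hb₄, hb₆, hb₈]
    simp only [map_zero, zero_mul, add_zero, map_mul, map_ofNat, map_one, map_neg, map_pow,
      map_sub, map_add, zero_sub, sub_zero]
    ring
  rw [h]
  exact ((((((((isoInt 2).mul (isoX.pow 6)).of_eq (by norm_num)).add
      (((isoInt 10).mul ((isoA).mul (isoX.pow 4))).of_eq (by norm_num))).add
      (((isoInt 40).mul ((isoB).mul (isoX.pow 3))).of_eq (by norm_num))).sub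
      (((isoInt 10).mul (((isoA).mul isoA).mul (isoX.pow 2))).of_eq (by norm_num))).sub
      (((isoInt 8).mul (((isoA).mul isoB).mul isoX)).of_eq (by norm_num))).sub
      (((isoInt 2).mul (((isoA).mul isoA).mul isoA)).of_eq (by norm_num))).sub
      (((isoInt 16).mul ((isoB).mul isoB)).of_eq (by norm_num))

lemma sq_ge_one {k : ℕ} (h : 1 ≤ k) : 1 ≤ k ^ 2 :=
  le_trans (by norm_num) (Nat.pow_le_pow_left h 2)

lemma sq_ge_four {k : ℕ} (h : 2 ≤ k) : 4 ≤ k ^ 2 :=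
  le_trans (by norm_num) (Nat.pow_le_pow_left h 2)

lemma iso_preΨ' (n : ℕ) : Iso (if Even n then n ^ 2 - 4 else n ^ 2 - 1) (Wc.preΨ' n) := by
  induction n using normEDSRec with
  | zero => rw [preΨ'_zero]; exact Iso.zero _
  | one => rw [preΨ'_one]; exact Iso.one.of_eq (by decide)
  | two => rw [preΨ'_two]; exact Iso.one.of_eq (by decide)
  | three => rw [preΨ'_three]; exact iso_Ψ₃.of_eq (by decide)
  | four => rw [preΨ'_four]; exact iso_preΨ₄.of_eq (by decide)
  | even m h1 h2 h3 h4 h5 =>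
    rw [preΨ'_even, if_pos (even_two_mul _)]
    have q2 : 4 ≤ (m+2)^2 := sq_ge_four (by omega)
    have q3 : 1 ≤ (m+3)^2 := sq_ge_one (by omega)
    have q3' : 4 ≤ (m+3)^2 := sq_ge_four (by omega)
    have q4 : 4 ≤ (m+4)^2 := sq_ge_four (by omega)
    have q4' : 1 ≤ (m+4)^2 := sq_ge_one (by omega)
    have q5 : 1 ≤ (m+5)^2 := sq_ge_one (by omega)
    have q5' : 4 ≤ (m+5)^2 := sq_ge_four (by omega)
    have q1 : 1 ≤ (m+1)^2 := sq_ge_one (by omega)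
    have q0 : 4 ≤ (2*(m+3))^2 := sq_ge_four (by omega)
    rcases Nat.even_or_odd m with hm | hm
    · rw [if_neg (by simp [parity_simps, hm])] at h1
      rw [if_pos (by simp [parity_simps, hm])] at h2
      rw [if_neg (by simp [parity_simps, hm])] at h3
      rw [if_pos (by simp [parity_simps, hm])] at h4
      rw [if_neg (by simp [parity_simps, hm])] at h5
      exact ((((h2.pow 2).mul h3).mul h5).of_eq (by zify [q2, q3, q5, q0]; ring)).sub
        (((h1.mul h3).mul (h4.pow 2)).of_eq (by zify [q1, q3, q4, q0]; ring))
    · rw [if_pos (by simp [parity_simps, hm])] at h1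
      rw [if_neg (by simp [parity_simps, hm])] at h2
      rw [if_pos (by simp [parity_simps, hm])] at h3
      rw [if_neg (by simp [parity_simps, hm])] at h4
      rw [if_pos (by simp [parity_simps, hm])] at h5
      have q1' : 4 ≤ (m+1)^2 := sq_ge_four (by rcases hm with ⟨j, rfl⟩; omega)
      have q2' : 1 ≤ (m+2)^2 := sq_ge_one (by omega)
      exact ((((h2.pow 2).mul h3).mul h5).of_eq (by zify [q2', q3', q5', q0]; ring)).sub
        (((h1.mul h3).mul (h4.pow 2)).of_eq (by zify [q1', q3', q4', q0]; ring))
  | odd m h1 h2 h3 h4 =>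
    rw [preΨ'_odd, if_neg (by simp [parity_simps])]
    have q1 : 1 ≤ (m+1)^2 := sq_ge_one (by omega)
    have q2 : 4 ≤ (m+2)^2 := sq_ge_four (by omega)
    have q2' : 1 ≤ (m+2)^2 := sq_ge_one (by omega)
    have q3 : 1 ≤ (m+3)^2 := sq_ge_one (by omega)
    have q3' : 4 ≤ (m+3)^2 := sq_ge_four (by omega)
    have q4 : 4 ≤ (m+4)^2 := sq_ge_four (by omega)
    have q4' : 1 ≤ (m+4)^2 := sq_ge_one (by omega)
    have q0 : 1 ≤ (2*(m+2)+1)^2 := sq_ge_one (by omega)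
    rcases Nat.even_or_odd m with hm | hm
    · rw [if_neg (by simp [parity_simps, hm])] at h1
      rw [if_pos (by simp [parity_simps, hm])] at h2
      rw [if_neg (by simp [parity_simps, hm])] at h3
      rw [if_pos (by simp [parity_simps, hm])] at h4
      rw [if_pos hm, if_pos hm]
      exact (((h4.mul (h2.pow 3)).mul (iso_Ψ₂Sq.pow 2)).of_eq
          (by zify [q4, q2, q0]; ring)).sub
        (((h1.mul (h3.pow 3)).mul Iso.one).of_eq (by zify [q1, q3, q0]; ring))
    · rw [if_pos (by simp [parity_simps, hm])] at h1
      rw [if_neg (by simp [parity_simps, hm])] at h2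
      rw [if_pos (by simp [parity_simps, hm])] at h3
      rw [if_neg (by simp [parity_simps, hm])] at h4
      have q1' : 4 ≤ (m+1)^2 := sq_ge_four (by rcases hm with ⟨j, rfl⟩; omega)
      rw [if_neg (Nat.not_even_iff_odd.2 hm), if_neg (Nat.not_even_iff_odd.2 hm)]
      exact (((h4.mul (h2.pow 3)).mul Iso.one).of_eq
          (by zify [q4', q2', q0]; ring)).sub
        (((h1.mul (h3.pow 3)).mul (iso_Ψ₂Sq.pow 2)).of_eq (by zify [q1', q3', q0]; ring))


lemma iso_coeff {w : ℕ} {p : Polynomial DivPolyRing} (h : Iso w p) {k : ℕ} {d : Fin 2 →₀ ℕ}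
    (hne : MvPolynomial.coeff d (p.coeff k) ≠ 0) : 2 * k + 4 * d 0 + 6 * d 1 = w := by
  have hc : MvPolynomial.coeff (Finsupp.cons k d) ((e).symm p) ≠ 0 := by
    rw [← finSuccEquiv_coeff_coeff d ((e).symm p) k, AlgEquiv.apply_symm_apply]
    exact hne
  have hw := h hc
  rw [Finsupp.weight_apply, Finsupp.sum_fintype _ _ (by intro i; simp)] at hw
  rw [Fin.sum_univ_three] at hw
  have c0 : (Finsupp.cons k d) 0 = k := Finsupp.cons_zero ..
  have c1 : (Finsupp.cons k d) 1 = d 0 := Finsupp.cons_succ 0 ..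
  have c2 : (Finsupp.cons k d) 2 = d 1 := Finsupp.cons_succ 1 ..
  rw [c0, c1, c2, show wt 0 = 2 from rfl, show wt 1 = 4 from rfl, show wt 2 = 6 from rfl,
    smul_eq_mul, smul_eq_mul, smul_eq_mul] at hw
  omega

lemma iso_ΨSq (n : ℕ) (hn : 1 ≤ n) : Iso (2 * n ^ 2 - 2) (Wc.ΨSq (n : ℤ)) := by
  rw [ΨSq_ofNat]
  have h := iso_preΨ' n
  rcases Nat.even_or_odd n with hm | hm
  · rw [if_pos hm] at h ⊢
    have q : 4 ≤ n ^ 2 := sq_ge_four (by rcases hm with ⟨j, rfl⟩; omega)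
    exact ((h.pow 2).mul iso_Ψ₂Sq).of_eq (by zify [q, show 2 ≤ 2 * n ^ 2 by omega]; ring)
  · rw [if_neg (Nat.not_even_iff_odd.2 hm)] at h ⊢
    have q : 1 ≤ n ^ 2 := sq_ge_one hn
    exact ((h.pow 2).mul Iso.one).of_eq
      (by zify [q, show 2 ≤ 2 * n ^ 2 by omega]; ring)

end DivPolyAux

/-- For every integer `n ≥ 1`, the polynomial `(Ψ′_n(X,Y))² ∈ ℤ[X,A,B]`
(which is Mathlib's `ΨSq n` for the curve `y² = x³ + Ax + B`) has the form
`n²·X^{n²−1} + c·X^{n²−3} + (lower order terms)` for some `c ∈ ℤ[A,B]`: it has degree `n²−1`,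
its leading coefficient is `n²`, and its coefficient in degree `n²−2` vanishes. -/
theorem PsiSq_natDegree_leadingCoeff_subleading (n : ℕ) (hn : 1 ≤ n) :
    (genericShortWeierstrass.ΨSq (n : ℤ)).natDegree = n ^ 2 - 1 ∧
    (genericShortWeierstrass.ΨSq (n : ℤ)).coeff (n ^ 2 - 1) = (n : DivPolyRing) ^ 2 ∧
    (2 ≤ n → (genericShortWeierstrass.ΨSq (n : ℤ)).coeff (n ^ 2 - 2) = 0) := by
  have hne : ((n : ℤ) : DivPolyRing) ≠ 0 := by
    rw [Int.cast_natCast]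
    exact_mod_cast Nat.cast_ne_zero.mpr (by omega)
  refine ⟨?_, ?_, ?_⟩
  · have h := genericShortWeierstrass.natDegree_ΨSq hne
    simpa using h
  · have h := genericShortWeierstrass.coeff_ΨSq (n : ℤ)
    simp only [Int.natAbs_natCast] at h
    rw [h]
    push_cast
    ring
  · intro h2
    by_contra hc
    obtain ⟨d, hd⟩ := MvPolynomial.ne_zero_iff.mp hc
    have hw := DivPolyAux.iso_coeff (DivPolyAux.iso_ΨSq n hn) hd
    have hq : 4 ≤ n ^ 2 := DivPolyAux.sq_ge_four h2
    obtain ⟨s, hs⟩ : ∃ s, n ^ 2 = s := ⟨_, rfl⟩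
    rw [hs] at hw hq
    omega
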